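/- arXiv:1406.6899 — 2 statements merged into one kernel-verified Lean document; each statement's English description precedes it below -/
import Mathlib

section
/- For n ≥ 3, the generalized quaternion group Q_{2^n} has exactly 2^{n-2} + n cyclic subgroups and 2^{n-1} + n − 1 subgroups in total; hence cdeg(Q_{2^n}) = (2^{n-2}+n)/(2^{n-1}+n−1), which tends to 1/2 as n → ∞. -/
namespace CdegAux

/-- The `d`-torsion subgroup of `ZMod N`. -/
def tor (N d : ℕ) : AddSubgroup (ZMod N) where
  carrier := {x | d • x = 0}
  zero_mem' := by simp
  add_mem' := by
    intro x y hx hy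
    simp only [Set.mem_setOf_eq, smul_add] at *
    rw [hx, hy, add_zero]
  neg_mem' := by
    intro x hx
    simp only [Set.mem_setOf_eq, smul_neg] at *
    rw [hx, neg_zero]

lemma mem_tor {N d : ℕ} {x : ZMod N} : x ∈ tor N d ↔ d • x = 0 := Iff.rfl

lemma zmultiples_le_tor {N d : ℕ} (hd : d ∣ N) :
    AddSubgroup.zmultiples (((N / d : ℕ) : ZMod N)) ≤ tor N d := by
  rw [AddSubgroup.zmultiples_le, mem_tor, ← Nat.cast_smul_eq_nsmul (ZMod N) d, smul_eq_mul,
    ← Nat.cast_mul, Nat.mul_div_cancel' hd, ZMod.natCast_self]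

lemma card_tor {N d : ℕ} (hN : N ≠ 0) (hd : d ∣ N) (hd0 : d ≠ 0) :
    Nat.card (tor N d) = d := by
  haveI : NeZero N := ⟨hN⟩
  classical
  refine le_antisymm ?_ ?_
  · have h := IsAddCyclic.card_nsmul_eq_zero_le (α := ZMod N) (n := d) (Nat.pos_of_ne_zero hd0)
    rw [Nat.card_eq_fintype_card]
    calc Fintype.card (tor N d) = (Finset.univ.filter fun a : ZMod N => d • a = 0).card := by
          rw [← Fintype.card_subtype]
          exact Fintype.card_congr (Equiv.subtypeEquivRight fun x => Iff.rfl)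
      _ ≤ d := h
  · calc d = Nat.card (AddSubgroup.zmultiples (((N / d : ℕ) : ZMod N))) := by
          rw [Nat.card_zmultiples, ZMod.addOrderOf_coe _ hN,
            Nat.gcd_eq_right (Nat.div_dvd_of_dvd hd), Nat.div_div_self hd hN]
      _ ≤ Nat.card (tor N d) := by
          exact AddSubgroup.card_le_of_le (zmultiples_le_tor hd)

lemma eq_tor {N : ℕ} (hN : N ≠ 0) (T : AddSubgroup (ZMod N)) :
    T = tor N (Nat.card T) := by
  haveI : NeZero N := ⟨hN⟩
  haveI : Finite T := inferInstance
  have hdvd : Nat.card T ∣ N := by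
    simpa [Nat.card_zmod] using AddSubgroup.card_addSubgroup_dvd_card T
  refine AddSubgroup.eq_of_le_of_card_ge ?_ ?_
  · intro x hx
    rw [mem_tor]
    have h0 : (Nat.card T) • (⟨x, hx⟩ : T) = 0 := card_nsmul_eq_zero'
    exact congrArg (Subtype.val) h0
  · rw [card_tor hN hdvd Nat.card_pos.ne']


section PowTwo

variable {N m : ℕ}

/-- The subgroup of `ZMod N` (`N = 2^m`) of index `2^j`. -/
def subF (j : Fin (m+1)) : AddSubgroup (ZMod N) := tor N (2 ^ (m - j.val))

lemma card_subF (h : N = 2^m) (j : Fin (m+1)) : Nat.card (subF (N := N) j) = 2 ^ (m - j.val) := by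
  refine card_tor (h ▸ pow_ne_zero m two_ne_zero) ?_ (by positivity)
  · rw [h]; exact pow_dvd_pow 2 (Nat.sub_le m j.val)

lemma subF_bijective (h : N = 2^m) : Function.Bijective (subF (N := N) (m := m)) := by
  constructor
  · intro i j hij
    have := congrArg (fun T : AddSubgroup (ZMod N) => Nat.card T) hij
    simp only [card_subF h] at this
    have h2 : m - i.val = m - j.val := Nat.pow_right_injective le_rfl this
    ext
    omega
  · intro T
    have hN : N ≠ 0 := h ▸ pow_ne_zero m two_ne_zero
    have hdvd : Nat.card T ∣ 2^m := by
      simpa [Nat.card_zmod, h] using AddSubgroup.card_addSubgroup_dvd_card T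
    obtain ⟨i, hi, hT⟩ := (Nat.dvd_prime_pow Nat.prime_two).1 hdvd
    refine ⟨⟨m - i, by omega⟩, ?_⟩
    rw [subF]
    have : m - (m - i) = i := by omega
    rw [this, ← hT]
    exact (eq_tor hN T).symm

lemma card_addSubgroup (h : N = 2^m) : Nat.card (AddSubgroup (ZMod N)) = m + 1 := by
  rw [← Nat.card_congr (Equiv.ofBijective _ (subF_bijective h))]
  simp

lemma mem_subF (h : N = 2^m) (hm : 1 ≤ m) (j : Fin (m+1)) :
    ((N / 2 : ℕ) : ZMod N) ∈ subF (N := N) j ↔ j.val < m := by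
  have hN2 : N / 2 = 2 ^ (m - 1) := by
    rw [h, show (2:ℕ)^m = 2^(m-1)*2 from by rw [← pow_succ]; congr 1; omega,
      Nat.mul_div_cancel _ two_pos]
  have hsm : (2 ^ (m - j.val)) • (((N/2 : ℕ) : ZMod N)) = ((2 ^ (m - j.val) * (N/2) : ℕ) : ZMod N) := by
    push_cast [nsmul_eq_mul]
    ring
  rw [subF, mem_tor, hsm, ZMod.natCast_eq_zero_iff, hN2, h, ← pow_add,
    Nat.pow_dvd_pow_iff_le_right one_lt_two]
  have := j.isLt
  omega

lemma card_quot_subF (h : N = 2^m) (j : Fin (m+1)) :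
    Nat.card (ZMod N ⧸ subF (N := N) j) = 2 ^ j.val := by
  have hN : N ≠ 0 := h ▸ pow_ne_zero m two_ne_zero
  haveI : NeZero N := ⟨hN⟩
  have h1 : (subF (N := N) j).index * Nat.card (subF (N := N) j) = Nat.card (ZMod N) :=
    AddSubgroup.index_mul_card _
  rw [Nat.card_zmod, card_subF h] at h1
  have h2 : 2 ^ j.val * 2 ^ (m - j.val) = 2 ^ m := by
    rw [← pow_add]
    congr 1
    have := j.isLt
    omega
  have : (subF (N := N) j).index = 2 ^ j.val :=
    Nat.eq_of_mul_eq_mul_right (pow_pos two_pos _) (h1.trans (h.trans h2.symm))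
  rw [← this]
  rfl

end PowTwo

section Quat

open QuaternionGroup

variable {q : ℕ}

/-- The subgroup `{a t | t ∈ T}` of the quaternion group. -/
def aSub (T : AddSubgroup (ZMod (2*q))) : Subgroup (QuaternionGroup q) where
  carrier := {x | match x with | .a t => t ∈ T | .xa _ => False}
  one_mem' := T.zero_mem
  mul_mem' := by
    rintro (s|s) (t|t) hs ht
    · exact T.add_mem hs ht
    · exact ht.elim
    · exact hs.elim
    · exact hs.elim
  inv_mem' := by
    rintro (s|s) hs
    · exact T.neg_mem hs
    · exact hs.elim

/-- The subgroup `{a t | t ∈ T} ∪ {xa j | [j] = c}`. -/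
def bSub (T : AddSubgroup (ZMod (2*q))) (hT : ((q : ℕ) : ZMod (2*q)) ∈ T)
    (c : ZMod (2*q) ⧸ T) : Subgroup (QuaternionGroup q) where
  carrier := {x | match x with
    | .a t => t ∈ T
    | .xa j => (j : ZMod (2*q) ⧸ T) = c}
  one_mem' := T.zero_mem
  mul_mem' := by
    rintro (s|s) (t|t) hs ht
    · exact T.add_mem hs ht
    · show ((t - s : ZMod (2*q)) : ZMod (2*q) ⧸ T) = c
      rw [QuotientAddGroup.mk_sub, (QuotientAddGroup.eq_zero_iff s).mpr hs, sub_zero]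
      exact ht
    · show ((s + t : ZMod (2*q)) : ZMod (2*q) ⧸ T) = c
      rw [QuotientAddGroup.mk_add, (QuotientAddGroup.eq_zero_iff t).mpr ht, add_zero]
      exact hs
    · show ((q : ℕ) : ZMod (2*q)) + t - s ∈ T
      have h1 : t - s ∈ T := by
        rw [← QuotientAddGroup.eq_zero_iff, QuotientAddGroup.mk_sub, hs, ht, sub_self]
      have h2 := T.add_mem hT h1
      rwa [← add_sub_assoc] at h2
  inv_mem' := by
    rintro (s|s) hs
    · exact T.neg_mem hs
    · show ((((q:ℕ) : ZMod (2*q)) + s : ZMod (2*q)) : ZMod (2*q) ⧸ T) = c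
      rw [QuotientAddGroup.mk_add, (QuotientAddGroup.eq_zero_iff _).mpr hT, zero_add]
      exact hs

/-- The additive subgroup `{t | a t ∈ H}`. -/
def toA (H : Subgroup (QuaternionGroup q)) : AddSubgroup (ZMod (2*q)) where
  carrier := {t | QuaternionGroup.a t ∈ H}
  zero_mem' := show QuaternionGroup.a 0 ∈ H from one_def ▸ H.one_mem
  add_mem' := by
    intro s t hs ht
    show QuaternionGroup.a (s + t) ∈ H
    rw [← a_mul_a]
    exact H.mul_mem hs ht
  neg_mem' := by
    intro t ht
    show QuaternionGroup.a (-t) ∈ H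
    have : (QuaternionGroup.a t)⁻¹ = QuaternionGroup.a (-t) := rfl
    rw [← this]
    exact H.inv_mem ht

lemma q_mem_toA (H : Subgroup (QuaternionGroup q)) {j : ZMod (2*q)}
    (hj : QuaternionGroup.xa j ∈ H) : ((q : ℕ) : ZMod (2*q)) ∈ toA H :=
  show QuaternionGroup.a ((q : ℕ) : ZMod (2*q)) ∈ H from xa_sq j ▸ H.pow_mem hj 2

/-- The classification target type. -/
abbrev RHS (q : ℕ) := AddSubgroup (ZMod (2*q)) ⊕
  (Σ T : {T : AddSubgroup (ZMod (2*q)) // ((q : ℕ) : ZMod (2*q)) ∈ T}, ZMod (2*q) ⧸ T.val)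

open scoped Classical in
/-- Classification of subgroups of the generalized quaternion group. -/
noncomputable def subgroupEquiv (q : ℕ) : Subgroup (QuaternionGroup q) ≃ RHS q where
  toFun H :=
    if h : ∃ j, QuaternionGroup.xa j ∈ H then
      Sum.inr ⟨⟨toA H, q_mem_toA H h.choose_spec⟩, (h.choose : ZMod (2*q) ⧸ toA H)⟩
    else Sum.inl (toA H)
  invFun x := match x with
    | .inl T => aSub T
    | .inr ⟨⟨T, hT⟩, c⟩ => bSub T hT c
  left_inv := by
    intro H
    by_cases h : ∃ j, QuaternionGroup.xa j ∈ H
    · simp only [dif_pos h]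
      have hj₀ : QuaternionGroup.xa h.choose ∈ H := h.choose_spec
      ext x
      rcases x with t | j
      · exact Iff.rfl
      · show ((j : ZMod (2*q)) : ZMod (2*q) ⧸ toA H) = (h.choose : ZMod (2*q) ⧸ toA H) ↔ _
        constructor
        · intro hc
          have h1 : j - h.choose ∈ toA H := by
            rw [← QuotientAddGroup.eq_zero_iff, QuotientAddGroup.mk_sub, hc, sub_self]
          have h2 : QuaternionGroup.xa h.choose * QuaternionGroup.a (j - h.choose) ∈ H :=
            H.mul_mem hj₀ h1
          rwa [xa_mul_a, add_sub_cancel] at h2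
        · intro hj
          have h2 : QuaternionGroup.xa h.choose * QuaternionGroup.xa j ∈ H := H.mul_mem hj₀ hj
          rw [xa_mul_xa] at h2
          have h3 : (QuaternionGroup.a ((q:ℕ) : ZMod (2*q)))⁻¹ *
              QuaternionGroup.a (((q:ℕ) : ZMod (2*q)) + j - h.choose) ∈ H :=
            H.mul_mem (H.inv_mem (q_mem_toA H hj₀)) h2
          have h4 : QuaternionGroup.a (j - h.choose) ∈ H := by
            have : (QuaternionGroup.a ((q:ℕ) : ZMod (2*q)))⁻¹ *
                QuaternionGroup.a (((q:ℕ) : ZMod (2*q)) + j - h.choose) =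
                QuaternionGroup.a (j - h.choose) := by
              have hinv : (QuaternionGroup.a ((q:ℕ) : ZMod (2*q)))⁻¹ =
                  QuaternionGroup.a (-((q:ℕ) : ZMod (2*q))) := rfl
              rw [hinv, a_mul_a]
              congr 1
              ring
            rwa [this] at h3
          have h5 : j - h.choose ∈ toA H := h4
          rw [← QuotientAddGroup.eq_zero_iff] at h5
          rw [show ((j : ZMod (2*q)) : ZMod (2*q) ⧸ toA H) =
            (((j - h.choose : ZMod (2*q)) : ZMod (2*q) ⧸ toA H)) + (h.choose : ZMod (2*q) ⧸ toA H)
            from by rw [← QuotientAddGroup.mk_add]; congr 1; ring, h5, zero_add]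
    · simp only [dif_neg h]
      ext x
      rcases x with t | j
      · exact Iff.rfl
      · exact iff_of_false (fun hf => hf) (fun hf => h ⟨j, hf⟩)
  right_inv := by
    rintro (T | ⟨⟨T, hT⟩, c⟩)
    · have h : ¬ ∃ j, QuaternionGroup.xa j ∈ aSub T := by rintro ⟨j, hj⟩; exact hj
      simp only [dif_neg h]
      congr 1
    · obtain ⟨j₀, hj₀⟩ := QuotientAddGroup.mk_surjective c
      have h : ∃ j, QuaternionGroup.xa j ∈ bSub T hT c := ⟨j₀, hj₀⟩
      simp only [dif_pos h]
      have hc : ((h.choose : ZMod (2*q)) : ZMod (2*q) ⧸ T) = c := h.choose_spec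
      exact congrArg (fun z => Sum.inr (⟨⟨T, hT⟩, z⟩ :
        Σ T : {T : AddSubgroup (ZMod (2*q)) // ((q : ℕ) : ZMod (2*q)) ∈ T}, ZMod (2*q) ⧸ T.val)) hc

end Quat

section Count

open QuaternionGroup

variable {q m : ℕ}

lemma nat_card_sigma {ι : Type*} [Fintype ι] (F : ι → Type*) [∀ i, Finite (F i)] :
    Nat.card (Σ i, F i) = ∑ i, Nat.card (F i) := by
  letI := fun i => Fintype.ofFinite (F i)
  simp [Nat.card_eq_fintype_card]

lemma sum_two_pow (m : ℕ) : ∑ j ∈ Finset.range m, 2 ^ j = 2 ^ m - 1 := by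
  induction m with
  | zero => simp
  | succ k ih =>
    rw [Finset.sum_range_succ, ih, pow_succ]
    have : 1 ≤ 2 ^ k := Nat.one_le_two_pow
    omega

/-- The subgroups of `ZMod (2*q)` containing `q`, indexed by `Fin m`. -/
def gFun (hq : 2*q = 2^m) (hm : 1 ≤ m) :
    Fin m → {T : AddSubgroup (ZMod (2*q)) // ((q : ℕ) : ZMod (2*q)) ∈ T} := fun j =>
  ⟨subF (N := 2*q) (m := m) ⟨j.val, by omega⟩, by
    have h := (mem_subF hq hm ⟨j.val, by omega⟩).mpr (by simpa using j.isLt)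
    simpa [Nat.mul_div_cancel_left q two_pos] using h⟩

lemma gFun_bijective (hq : 2*q = 2^m) (hm : 1 ≤ m) : Function.Bijective (gFun hq hm) := by
  constructor
  · intro i j hij
    have h := (subF_bijective hq).injective (congrArg Subtype.val hij)
    have := congrArg Fin.val h
    exact Fin.ext this
  · rintro ⟨T, hκ⟩
    obtain ⟨j, hj⟩ := (subF_bijective hq).surjective T
    have hlt : j.val < m := by
      refine (mem_subF hq hm j).mp ?_
      rw [hj]
      simpa [Nat.mul_div_cancel_left q two_pos] using hκ
    refine ⟨⟨j.val, hlt⟩, Subtype.ext ?_⟩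
    have h2 : ∀ (p : j.val < m + 1), subF (N := 2*q) (⟨j.val, p⟩ : Fin (m+1)) = T := fun p => by
      rw [show (⟨j.val, p⟩ : Fin (m+1)) = j from Fin.ext rfl, hj]
    exact h2 _

lemma card_sigma_part (hq : 2*q = 2^m) (hm : 1 ≤ m) :
    Nat.card (Σ T : {T : AddSubgroup (ZMod (2*q)) // ((q : ℕ) : ZMod (2*q)) ∈ T},
      ZMod (2*q) ⧸ T.val) = 2 ^ m - 1 := by
  haveI : NeZero (2*q) := ⟨hq ▸ pow_ne_zero m two_ne_zero⟩
  rw [Nat.card_congr (Equiv.sigmaCongrLeft (β := fun T : {T : AddSubgroup (ZMod (2*q)) //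
      ((q : ℕ) : ZMod (2*q)) ∈ T} => ZMod (2*q) ⧸ T.val)
      (Equiv.ofBijective _ (gFun_bijective hq hm))).symm]
  rw [nat_card_sigma]
  have hval : ∀ j : Fin m, Nat.card (ZMod (2*q) ⧸ ((gFun hq hm) j).val) = 2 ^ j.val := fun j =>
    card_quot_subF hq ⟨j.val, by omega⟩
  simp only [Equiv.ofBijective_apply]
  rw [Finset.sum_congr rfl fun j _ => hval j]
  rw [Fin.sum_univ_eq_sum_range (fun j => 2 ^ j) m]
  exact sum_two_pow m

lemma card_subgroups (hq : 2*q = 2^m) (hm : 1 ≤ m) :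
    Nat.card (Subgroup (QuaternionGroup q)) = 2 ^ m + m := by
  haveI : NeZero (2*q) := ⟨hq ▸ pow_ne_zero m two_ne_zero⟩
  haveI : Finite (AddSubgroup (ZMod (2*q))) :=
    Finite.of_injective _ (SetLike.coe_injective (A := AddSubgroup (ZMod (2*q))))
  rw [Nat.card_congr (subgroupEquiv q), Nat.card_sum, card_addSubgroup hq, card_sigma_part hq hm]
  have : 1 ≤ 2 ^ m := Nat.one_le_two_pow
  omega

end Count

section Cyclic

open QuaternionGroup

variable {q m : ℕ}

lemma isCyclic_zpowers {G : Type*} [Group G] (g : G) : IsCyclic (Subgroup.zpowers g) := by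
  let f : Multiplicative ℤ →* (Subgroup.zpowers g) :=
    { toFun := fun z => ⟨g ^ z.toAdd, zpow_mem (Subgroup.mem_zpowers g) _⟩
      map_one' := Subtype.ext (zpow_zero g)
      map_mul' := fun x y => Subtype.ext (zpow_add g _ _) }
  apply isCyclic_of_surjective f
  rintro ⟨y, hy⟩
  obtain ⟨k, hk⟩ := Subgroup.mem_zpowers_iff.mp hy
  exact ⟨Multiplicative.ofAdd k, Subtype.ext hk⟩

lemma isCyclic_aSub (T : AddSubgroup (ZMod (2*q))) : IsCyclic (aSub T) := by
  let f : Multiplicative T →* aSub T :=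
    { toFun := fun t => ⟨QuaternionGroup.a (t.toAdd : ZMod (2*q)), t.toAdd.2⟩
      map_one' := Subtype.ext (by
        show QuaternionGroup.a ((0 : T) : ZMod (2*q)) = 1
        rw [ZeroMemClass.coe_zero, ← one_def])
      map_mul' := fun x y => Subtype.ext (by
        show QuaternionGroup.a _ = QuaternionGroup.a _ * QuaternionGroup.a _
        rw [a_mul_a]
        rfl) }
  apply isCyclic_of_surjective f
  rintro ⟨(t | j), ht⟩
  · exact ⟨Multiplicative.ofAdd ⟨t, ht⟩, rfl⟩
  · exact ht.elim

lemma kappa_add_kappa : ((q:ℕ) : ZMod (2*q)) + ((q:ℕ) : ZMod (2*q)) = 0 := by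
  rw [← Nat.cast_add, ← two_mul, ZMod.natCast_self]

lemma kappa_mem_tor_two : ((q:ℕ) : ZMod (2*q)) ∈ tor (2*q) 2 := by
  rw [mem_tor, two_nsmul]
  exact kappa_add_kappa

lemma mem_tor_two_iff (hq0 : q ≠ 0) {t : ZMod (2*q)} :
    t ∈ tor (2*q) 2 ↔ t = 0 ∨ t = ((q:ℕ) : ZMod (2*q)) := by
  constructor
  · intro ht
    have hN : (2*q) ≠ 0 := by omega
    haveI : NeZero (2*q) := ⟨hN⟩
    have hκ0 : ((q:ℕ) : ZMod (2*q)) ≠ 0 := by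
      rw [Ne, ZMod.natCast_eq_zero_iff]
      intro hdvd
      have := Nat.le_of_dvd (Nat.pos_of_ne_zero hq0) hdvd
      omega
    have hcard : Nat.card (tor (2*q) 2) = 2 := card_tor hN ⟨q, rfl⟩ two_ne_zero
    have hsub : ({0, ((q:ℕ) : ZMod (2*q))} : Set (ZMod (2*q))) ⊆ (tor (2*q) 2 : Set _) := by
      rintro x (rfl | rfl)
      exacts [(tor (2*q) 2).zero_mem, kappa_mem_tor_two]
    have hset : ((tor (2*q) 2 : Set (ZMod (2*q)))) = {0, ((q:ℕ) : ZMod (2*q))} := by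
      symm
      exact Set.eq_of_subset_of_ncard_le hsub
        (by rw [← Nat.card_coe_set_eq, Set.ncard_pair (Ne.symm hκ0)]; exact le_of_eq hcard)
        (Set.toFinite _)
    have ht' : t ∈ (tor (2*q) 2 : Set (ZMod (2*q))) := ht
    rw [hset] at ht'
    simpa using ht'
  · rintro (rfl | rfl)
    exacts [zero_mem _, kappa_mem_tor_two]

lemma isCyclic_bSub_iff (hq0 : q ≠ 0) (T : AddSubgroup (ZMod (2*q)))
    (hT : ((q:ℕ) : ZMod (2*q)) ∈ T) (c : ZMod (2*q) ⧸ T) :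
    IsCyclic (bSub T hT c) ↔ T = tor (2*q) 2 := by
  obtain ⟨j₀, hj₀⟩ := QuotientAddGroup.mk_surjective c
  have hj₀mem : QuaternionGroup.xa j₀ ∈ bSub T hT c := hj₀
  constructor
  · intro hcyc
    apply le_antisymm
    · intro t ht
      have hamem : QuaternionGroup.a t ∈ bSub T hT c := ht
      letI : CommGroup (bSub T hT c) := IsCyclic.commGroup
      have hcomm := mul_comm (⟨_, hj₀mem⟩ : bSub T hT c) ⟨_, hamem⟩
      have hval := congrArg Subtype.val hcomm
      simp only [Subgroup.coe_mul, MulMemClass.mk_mul_mk] at hval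
      rw [xa_mul_a, a_mul_xa, QuaternionGroup.xa.injEq] at hval
      rw [mem_tor, two_nsmul]
      have h2 : t + t = (j₀ + t) - (j₀ - t) := by ring
      rw [h2, hval, sub_self]
    · intro x hx
      rcases (mem_tor_two_iff hq0).mp hx with rfl | rfl
      exacts [T.zero_mem, hT]
  · rintro rfl
    have heq : bSub (tor (2*q) 2) hT c = Subgroup.zpowers (QuaternionGroup.xa j₀) := by
      apply le_antisymm
      · rintro (t | j) hx
        · rcases (mem_tor_two_iff hq0).mp hx with rfl | rfl
          · have h1 : (1 : QuaternionGroup q) ∈ Subgroup.zpowers (QuaternionGroup.xa j₀) :=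
              Subgroup.one_mem _
            rwa [one_def] at h1
          · rw [← xa_sq j₀]
            exact Subgroup.pow_mem _ (Subgroup.mem_zpowers _) 2
        · have hj : j - j₀ ∈ tor (2*q) 2 := by
            rw [← QuotientAddGroup.eq_zero_iff, QuotientAddGroup.mk_sub]
            have hxc : ((j : ZMod (2*q)) : ZMod (2*q) ⧸ tor (2*q) 2) = c := hx
            rw [hxc, hj₀, sub_self]
          rcases (mem_tor_two_iff hq0).mp hj with h0 | hκ
          · rw [show j = j₀ from by linear_combination h0]
            exact Subgroup.mem_zpowers _
          · have h3 : QuaternionGroup.xa j₀ ^ 3 = QuaternionGroup.xa j := by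
              rw [pow_succ, xa_sq, a_mul_xa]
              congr 1
              have hκκ := kappa_add_kappa (q := q)
              linear_combination -hκ - hκκ
            rw [← h3]
            exact Subgroup.pow_mem _ (Subgroup.mem_zpowers _) 3
      · rw [Subgroup.zpowers_le]
        exact hj₀mem
    rw [heq]
    exact isCyclic_zpowers _

/-- The predicate on the classification data corresponding to cyclicity. -/
def cycP : RHS q → Prop := fun x => match x with
  | .inl _ => True
  | .inr s => s.1 = ⟨tor (2*q) 2, kappa_mem_tor_two⟩

lemma isCyclic_symm_iff (hq0 : q ≠ 0) (x : RHS q) :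
    IsCyclic ((subgroupEquiv q).symm x) ↔ cycP x := by
  rcases x with T | ⟨⟨T, hT⟩, c⟩
  · exact iff_of_true (isCyclic_aSub T) trivial
  · show IsCyclic (bSub T hT c) ↔ _
    rw [isCyclic_bSub_iff hq0 T hT c]
    constructor
    · intro h
      exact Subtype.ext h
    · intro h
      exact congrArg Subtype.val h

/-- The fiber of a sigma type over a fixed base point. -/
def sigmaFiberEquiv'' {S : Type*} {F : S → Type*} (T₀ : S) :
    {s : Σ T, F T // s.1 = T₀} ≃ F T₀ where
  toFun s := s.prop ▸ s.val.2
  invFun x := ⟨⟨T₀, x⟩, rfl⟩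
  left_inv := by
    rintro ⟨⟨T, x⟩, h⟩
    dsimp only at h
    subst h
    rfl
  right_inv := fun x => rfl

lemma card_cyclic (hq : 2*q = 2^m) (hm : 1 ≤ m) :
    Nat.card {H : Subgroup (QuaternionGroup q) // IsCyclic H} = (m + 1) + 2 ^ (m-1) := by
  have hq0 : q ≠ 0 := by
    intro h0
    rw [h0, mul_zero] at hq
    exact (pow_ne_zero m two_ne_zero) hq.symm
  haveI : NeZero (2*q) := ⟨by omega⟩
  haveI : Finite (AddSubgroup (ZMod (2*q))) :=
    Finite.of_injective _ (SetLike.coe_injective (A := AddSubgroup (ZMod (2*q))))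
  have e1 : {H : Subgroup (QuaternionGroup q) // IsCyclic H} ≃ {x : RHS q // cycP x} :=
    (subgroupEquiv q).subtypeEquiv (fun H => by
      have h1 := isCyclic_symm_iff hq0 (subgroupEquiv q H)
      rwa [Equiv.symm_apply_apply] at h1)
  have e2 : {x : RHS q // cycP x} ≃
      (AddSubgroup (ZMod (2*q))) ⊕ (ZMod (2*q) ⧸ tor (2*q) 2) := by
    refine Equiv.subtypeSum.trans (Equiv.sumCongr ?_ ?_)
    · exact Equiv.subtypeUnivEquiv (fun T => trivial)
    · exact sigmaFiberEquiv'' _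
  rw [Nat.card_congr (e1.trans e2), Nat.card_sum, card_addSubgroup hq]
  have htor : tor (2*q) 2 = subF (N := 2*q) (m := m) ⟨m-1, by omega⟩ := by
    rw [subF, show m - (m-1) = 1 by omega, pow_one]
  have hquot : Nat.card (ZMod (2*q) ⧸ tor (2*q) 2) = 2 ^ (m-1) := by
    rw [htor]
    exact card_quot_subF hq ⟨m-1, by omega⟩
  rw [hquot]

end Cyclic

section Limit

open Filter

lemma aux_g_tendsto :
    Tendsto (fun k : ℕ => ((2^k + (k+2) : ℕ) : ℝ) / ((2^(k+1) + (k+1) : ℕ) : ℝ))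
      atTop (nhds (1/2)) := by
  have hk : Tendsto (fun k : ℕ => (k:ℝ)/2^k) atTop (nhds 0) := by
    simpa using tendsto_pow_const_div_const_pow_of_one_lt 1 (by norm_num : (1:ℝ) < 2)
  have hpow : Tendsto (fun k : ℕ => ((1:ℝ)/2)^k) atTop (nhds 0) :=
    tendsto_pow_atTop_nhds_zero_of_lt_one (by norm_num) (by norm_num)
  have h1 : Tendsto (fun k : ℕ => ((k:ℝ)+2)/2^k) atTop (nhds 0) := by
    have h := hk.add (hpow.const_mul 2)
    norm_num at h
    refine h.congr fun k => ?_
    rw [div_pow, one_pow, mul_one_div, ← add_div]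
  have h2 : Tendsto (fun k : ℕ => ((k:ℝ)+1)/2^k) atTop (nhds 0) := by
    have h := hk.add (hpow.const_mul 1)
    norm_num at h
    refine h.congr fun k => ?_
    rw [div_pow, one_pow, ← add_div]
  have hnum : Tendsto (fun k : ℕ => 1 + ((k:ℝ)+2)/2^k) atTop (nhds (1 + 0)) :=
    tendsto_const_nhds.add h1
  have hden : Tendsto (fun k : ℕ => 2 + ((k:ℝ)+1)/2^k) atTop (nhds (2 + 0)) :=
    tendsto_const_nhds.add h2
  have hdiv := hnum.div hden (by norm_num)
  have hlim : ((1:ℝ) + 0) / (2 + 0) = 1/2 := by norm_num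
  rw [hlim] at hdiv
  refine hdiv.congr fun k => ?_
  have hpk : (2:ℝ)^k ≠ 0 := by positivity
  show (1 + ((k:ℝ)+2)/2^k)/(2 + ((k:ℝ)+1)/2^k) =
    ((2^k + (k+2) : ℕ) : ℝ) / ((2^(k+1) + (k+1) : ℕ) : ℝ)
  push_cast
  rw [div_eq_div_iff (by positivity) (by positivity)]
  field_simp
  ring_nf
  try exact Or.inl trivial

lemma aux_real_tendsto :
    Tendsto (fun n : ℕ => ((2^(n-2) + n : ℕ) : ℝ) / ((2^(n-1) + n - 1 : ℕ) : ℝ))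
      atTop (nhds (1/2)) := by
  have hcomp : Tendsto (fun n : ℕ =>
      ((2^(n-2) + ((n-2)+2) : ℕ) : ℝ) / ((2^((n-2)+1) + ((n-2)+1) : ℕ) : ℝ))
      atTop (nhds (1/2)) := aux_g_tendsto.comp (tendsto_sub_atTop_nat 2)
  refine Tendsto.congr' ?_ hcomp
  filter_upwards [eventually_ge_atTop 3] with n hn
  have e1 : (n-2)+2 = n := by omega
  have e2 : (n-2)+1 = n-1 := by omega
  have e3 : ∀ K : ℕ, K + (n-1) = K + n - 1 := fun K => by omega
  rw [e1, e2, e3]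

end Limit

end CdegAux

noncomputable def cdeg (G : Type*) [Group G] : ℚ :=
  (Nat.card {H : Subgroup G // IsCyclic H} : ℚ) / (Nat.card (Subgroup G) : ℚ)

theorem cdeg_generalized_quaternion :
    (∀ n : ℕ, 3 ≤ n →
      Nat.card {H : Subgroup (QuaternionGroup (2 ^ (n - 2))) // IsCyclic H} =
        2 ^ (n - 2) + n ∧
      Nat.card (Subgroup (QuaternionGroup (2 ^ (n - 2)))) = 2 ^ (n - 1) + n - 1 ∧
      cdeg (QuaternionGroup (2 ^ (n - 2))) =
        ((2 ^ (n - 2) + n : ℕ) : ℚ) / ((2 ^ (n - 1) + n - 1 : ℕ) : ℚ)) ∧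
    Filter.Tendsto (fun n : ℕ => cdeg (QuaternionGroup (2 ^ (n - 2))))
      Filter.atTop (nhds (1 / 2)) := by
  have hmain : ∀ n : ℕ, 3 ≤ n →
      Nat.card {H : Subgroup (QuaternionGroup (2 ^ (n - 2))) // IsCyclic H} =
        2 ^ (n - 2) + n ∧
      Nat.card (Subgroup (QuaternionGroup (2 ^ (n - 2)))) = 2 ^ (n - 1) + n - 1 ∧
      cdeg (QuaternionGroup (2 ^ (n - 2))) =
        ((2 ^ (n - 2) + n : ℕ) : ℚ) / ((2 ^ (n - 1) + n - 1 : ℕ) : ℚ) := by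
    intro n hn
    have hq : 2 * 2 ^ (n - 2) = 2 ^ (n - 1) := by
      rw [← pow_succ']
      congr 1
      omega
    have hm : 1 ≤ n - 1 := by omega
    have hcyc := CdegAux.card_cyclic (m := n - 1) hq hm
    rw [show (n-1) + 1 = n by omega, show (n-1) - 1 = n - 2 by omega] at hcyc
    have htot := CdegAux.card_subgroups (m := n - 1) hq hm
    have hcyc' : Nat.card {H : Subgroup (QuaternionGroup (2 ^ (n - 2))) // IsCyclic H} =
        2 ^ (n - 2) + n := by rw [hcyc]; omega
    have htot' : Nat.card (Subgroup (QuaternionGroup (2 ^ (n - 2)))) = 2 ^ (n - 1) + n - 1 := by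
      rw [htot]
      have h1 : 1 ≤ 2 ^ (n-1) := Nat.one_le_two_pow
      omega
    refine ⟨hcyc', htot', ?_⟩
    rw [cdeg, hcyc', htot']
  refine ⟨hmain, ?_⟩
  have hev : (fun n : ℕ => cdeg (QuaternionGroup (2 ^ (n - 2)))) =ᶠ[Filter.atTop]
      (fun n : ℕ => ((2 ^ (n - 2) + n : ℕ) : ℚ) / ((2 ^ (n - 1) + n - 1 : ℕ) : ℚ)) := by
    filter_upwards [Filter.eventually_ge_atTop 3] with n hn
    exact (hmain n hn).2.2
  rw [Filter.tendsto_congr' hev, Rat.isEmbedding_coe_real.tendsto_nhds_iff]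
  have hhalf : (((1:ℚ)/2 : ℚ) : ℝ) = 1/2 := by norm_num
  rw [hhalf]
  refine CdegAux.aux_real_tendsto.congr fun n => ?_
  simp only [Function.comp_apply]
  push_cast
  rfl
end

section
/- For every positive integer m, the dihedral group D_{2m} of order 2m has exactly m + τ(m) cyclic subgroups and τ(m) + σ(m) subgroups in total, so cdeg(D_{2m}) = (m + τ(m))/(τ(m) + σ(m)), where τ(m) and σ(m) are the number and the sum of the positive divisors of m. -/
open DihedralGroup

variable {m : ℕ}

def Kd (m d : ℕ) : AddSubgroup (ZMod m) := AddSubgroup.zmultiples ((m / d : ℕ) : ZMod m)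

lemma card_Kd (hm : m ≠ 0) {d : ℕ} (hd : d ∣ m) : Nat.card (Kd m d) = d := by
  rw [Kd, Nat.card_zmultiples, ZMod.addOrderOf_coe _ hm,
    Nat.gcd_eq_right (Nat.div_dvd_of_dvd hd), Nat.div_div_self hd hm]

lemma mem_Kd (hm : m ≠ 0) {d : ℕ} (hd : d ∣ m) (hd0 : d ≠ 0) (x : ZMod m) :
    x ∈ Kd m d ↔ d • x = 0 := by
  haveI : NeZero m := ⟨hm⟩
  constructor
  · rintro ⟨k, rfl⟩
    rw [smul_comm]
    have h1 : d • ((m / d : ℕ) : ZMod m) = 0 := by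
      rw [nsmul_eq_mul, ← Nat.cast_mul, Nat.mul_div_cancel' hd, ZMod.natCast_self]
    rw [h1, smul_zero]
  · intro h
    have hx : ((x.val : ℕ) : ZMod m) = x := ZMod.natCast_rightInverse x
    have hdvd : m ∣ d * x.val := by
      rw [← ZMod.natCast_eq_zero_iff, Nat.cast_mul, hx]
      rw [nsmul_eq_mul] at h
      exact_mod_cast h
    obtain ⟨t, ht⟩ : (m / d) ∣ x.val := by
      have h2 : d * (m / d) ∣ d * x.val := by rwa [Nat.mul_div_cancel' hd]
      exact (mul_dvd_mul_iff_left (by exact_mod_cast hd0)).mp h2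
    refine ⟨(t : ℤ), ?_⟩
    rw [← hx, ht]
    push_cast
    rw [zsmul_eq_mul]
    push_cast
    ring

lemma card_mem_divisors (hm : m ≠ 0) (D : AddSubgroup (ZMod m)) :
    Nat.card D ∈ m.divisors := by
  haveI : NeZero m := ⟨hm⟩
  rw [Nat.mem_divisors]
  refine ⟨?_, hm⟩
  have := AddSubgroup.card_addSubgroup_dvd_card D
  rwa [Nat.card_zmod] at this

lemma le_Kd (hm : m ≠ 0) (D : AddSubgroup (ZMod m)) : D ≤ Kd m (Nat.card D) := by
  haveI : NeZero m := ⟨hm⟩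
  intro x hx
  rw [mem_Kd hm (Nat.mem_divisors.mp (card_mem_divisors hm D)).1
    (Nat.pos_of_mem_divisors (card_mem_divisors hm D)).ne' x]
  have h : (Nat.card D) • (⟨x, hx⟩ : D) = 0 := card_nsmul_eq_zero'
  have h2 := congrArg (AddSubgroup.subtype D) h
  rw [map_nsmul, map_zero] at h2
  exact h2

lemma eq_of_le_of_card (hm : m ≠ 0) {D E : AddSubgroup (ZMod m)} (h : D ≤ E)
    (hc : Nat.card E ≤ Nat.card D) : D = E := by
  haveI : NeZero m := ⟨hm⟩
  haveI : Fintype (ZMod m) := ZMod.fintype m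
  apply SetLike.coe_injective
  refine Set.eq_of_subset_of_ncard_le h ?_ (Set.toFinite _)
  rwa [← Nat.card_coe_set_eq, ← Nat.card_coe_set_eq]

/-- Subgroups of `ZMod m` correspond to divisors of `m`. -/
noncomputable def zmodSubgroupEquiv (hm : m ≠ 0) :
    AddSubgroup (ZMod m) ≃ {d // d ∈ m.divisors} where
  toFun D := ⟨Nat.card D, card_mem_divisors hm D⟩
  invFun d := Kd m d
  left_inv D := by
    refine (eq_of_le_of_card hm (le_Kd hm D) ?_).symm
    rw [card_Kd hm (Nat.mem_divisors.mp (card_mem_divisors hm D)).1]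
  right_inv d := by
    ext
    exact card_Kd hm (Nat.mem_divisors.mp d.2).1

/-- The subgroup of `DihedralGroup m` built from a rotation subgroup `D` and an
optional coset of reflections. -/
def psi (D : AddSubgroup (ZMod m)) (o : Option (ZMod m ⧸ D)) :
    Subgroup (DihedralGroup m) where
  carrier := {x | match x with
    | DihedralGroup.r i => i ∈ D
    | DihedralGroup.sr j => o = some (QuotientAddGroup.mk j)}
  one_mem' := D.zero_mem
  mul_mem' := by
    rintro (a | a) (b | b) ha hb
    · exact D.add_mem ha hb
    · show o = some (QuotientAddGroup.mk (b - a))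
      rw [hb]
      congr 1
      rw [QuotientAddGroup.eq]
      have e : -b + (b - a) = -a := by ring
      rw [e]
      exact D.neg_mem ha
    · show o = some (QuotientAddGroup.mk (a + b))
      rw [ha]
      congr 1
      rw [QuotientAddGroup.eq]
      simpa using hb
    · show b - a ∈ D
      have : (QuotientAddGroup.mk a : ZMod m ⧸ D) = QuotientAddGroup.mk b := by
        rw [← Option.some_inj, ← ha, ← hb]
      rw [QuotientAddGroup.eq] at this
      simpa [neg_add_eq_sub] using this
  inv_mem' := by
    rintro (a | a) ha
    · exact D.neg_mem ha
    · exact ha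

@[simp] lemma r_mem_psi (D : AddSubgroup (ZMod m)) (o : Option (ZMod m ⧸ D)) (i : ZMod m) :
    DihedralGroup.r i ∈ psi D o ↔ i ∈ D := Iff.rfl

@[simp] lemma sr_mem_psi (D : AddSubgroup (ZMod m)) (o : Option (ZMod m ⧸ D)) (j : ZMod m) :
    DihedralGroup.sr j ∈ psi D o ↔ o = some (QuotientAddGroup.mk j) := Iff.rfl

/-- The rotation part of a subgroup of a dihedral group. -/
def rot (H : Subgroup (DihedralGroup m)) : AddSubgroup (ZMod m) where
  carrier := {i | DihedralGroup.r i ∈ H}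
  zero_mem' := H.one_mem
  add_mem' := by
    intro a b ha hb
    simpa using H.mul_mem ha hb
  neg_mem' := by
    intro a ha
    have h1 := H.inv_mem ha
    have h2 : (DihedralGroup.r a)⁻¹ = DihedralGroup.r (-a) := rfl
    rwa [h2] at h1

lemma psi_bijective :
    Function.Bijective (fun x : Σ D : AddSubgroup (ZMod m), Option (ZMod m ⧸ D) =>
      psi x.1 x.2) := by
  constructor
  · rintro ⟨D, o⟩ ⟨D', o'⟩ h
    dsimp at h
    have hD : D = D' := by
      ext i
      rw [← r_mem_psi D o, ← r_mem_psi D' o', h]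
    subst hD
    have ho : o = o' := by
      rcases o with _ | q
      · rcases o' with _ | q'
        · rfl
        · obtain ⟨j, rfl⟩ := QuotientAddGroup.mk_surjective q'
          have : DihedralGroup.sr j ∈ psi D (some (QuotientAddGroup.mk j)) := rfl
          rw [← h] at this
          exact absurd this (by simp)
      · obtain ⟨j, rfl⟩ := QuotientAddGroup.mk_surjective q
        have : DihedralGroup.sr j ∈ psi D (some (QuotientAddGroup.mk j)) := rfl
        rw [h] at this
        exact this.symm
    rw [ho]
  · intro H
    by_cases hs : ∃ j, DihedralGroup.sr j ∈ H
    · obtain ⟨j₀, hj₀⟩ := hs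
      refine ⟨⟨rot H, some (QuotientAddGroup.mk j₀)⟩, ?_⟩
      ext x
      rcases x with i | j
      · rfl
      · show (some (QuotientAddGroup.mk j₀) = some (QuotientAddGroup.mk j)) ↔ _
        rw [Option.some_inj, QuotientAddGroup.eq]
        constructor
        · intro hj
          have hr : DihedralGroup.r (j - j₀) ∈ H := by
            have : -j₀ + j ∈ rot H := hj
            exact (by simpa [neg_add_eq_sub] using this : j - j₀ ∈ rot H)
          have := H.mul_mem hj₀ hr
          simpa using this
        · intro hj
          have hr : DihedralGroup.r (j₀ - j) ∈ H := by simpa using H.mul_mem (H.inv_mem hj) hj₀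
          show -j₀ + j ∈ rot H
          have : -(j₀ - j) ∈ rot H := (rot H).neg_mem hr
          simpa [neg_sub, sub_eq_neg_add] using this
    · push_neg at hs
      refine ⟨⟨rot H, none⟩, ?_⟩
      ext x
      rcases x with i | j
      · rfl
      · show (none = some _) ↔ _
        simp [hs j]

lemma isCyclic_zpowers {G : Type*} [Group G] (g : G) : IsCyclic (Subgroup.zpowers g) := by
  refine ⟨⟨⟨g, Subgroup.mem_zpowers g⟩, ?_⟩⟩
  rintro ⟨x, k, rfl⟩
  exact ⟨k, Subtype.ext (by simp)⟩

lemma isCyclic_psi_none (D : AddSubgroup (ZMod m)) : IsCyclic (psi D none) := by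
  let f : Multiplicative D →* psi D none :=
    { toFun := fun x => ⟨DihedralGroup.r (x.toAdd : ZMod m), x.toAdd.2⟩
      map_one' := rfl
      map_mul' := by
        intro x y
        exact Subtype.ext (by simp [DihedralGroup.r_mul_r]) }
  apply isCyclic_of_surjective f
  rintro ⟨x | x, hx⟩
  · exact ⟨Multiplicative.ofAdd ⟨x, hx⟩, rfl⟩
  · exact absurd hx (by simp)

lemma psi_bot_some (j : ZMod m) :
    psi ⊥ (some (QuotientAddGroup.mk j)) = Subgroup.zpowers (DihedralGroup.sr j) := by
  apply le_antisymm
  · rintro (i | k) hx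
    · have : i = 0 := hx
      subst this
      exact Subgroup.one_mem _
    · have hk : (QuotientAddGroup.mk j : ZMod m ⧸ (⊥ : AddSubgroup (ZMod m))) =
        QuotientAddGroup.mk k := Option.some_inj.mp hx
      rw [QuotientAddGroup.eq] at hk
      have : k = j := by
        have := (AddSubgroup.mem_bot).mp hk
        linear_combination (norm := abel_nf) this
      subst this
      exact Subgroup.mem_zpowers _
  · rw [Subgroup.zpowers_le]
    rfl

lemma isCyclic_psi_bot_some (q : ZMod m ⧸ (⊥ : AddSubgroup (ZMod m))) :
    IsCyclic (psi ⊥ (some q)) := by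
  obtain ⟨j, rfl⟩ := QuotientAddGroup.mk_surjective q
  rw [psi_bot_some]
  exact isCyclic_zpowers _

lemma not_isCyclic_psi (hm : m ≠ 0) {D : AddSubgroup (ZMod m)} (hD : D ≠ ⊥)
    (q : ZMod m ⧸ D) : ¬ IsCyclic (psi D (some q)) := by
  haveI : NeZero m := ⟨hm⟩
  intro hc
  obtain ⟨i, hiD, hi0⟩ : ∃ i ∈ D, i ≠ 0 := by
    by_contra hcon
    push_neg at hcon
    exact hD (by ext x; simpa using ⟨fun hx => hcon x hx, fun hx => hx ▸ D.zero_mem⟩)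
  obtain ⟨j, rfl⟩ := QuotientAddGroup.mk_surjective q
  set H := psi D (some (QuotientAddGroup.mk j)) with hH
  haveI : Fintype H := Fintype.ofFinite _
  have ha : DihedralGroup.sr j ∈ H := rfl
  have hb : DihedralGroup.sr (j + i) ∈ H := by
    show _ = some _
    congr 1
    rw [QuotientAddGroup.eq]
    simpa using hiD
  set a : H := ⟨DihedralGroup.sr j, ha⟩ with hadef
  set b : H := ⟨DihedralGroup.sr (j + i), hb⟩ with hbdef
  have ha2 : a ^ 2 = 1 := by
    apply Subtype.ext
    show (DihedralGroup.sr j) ^ 2 = 1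
    rw [sq, DihedralGroup.sr_mul_sr, sub_self, DihedralGroup.one_def]
  have hb2 : b ^ 2 = 1 := by
    apply Subtype.ext
    show (DihedralGroup.sr (j + i)) ^ 2 = 1
    rw [sq, DihedralGroup.sr_mul_sr, sub_self, DihedralGroup.one_def]
  have ha1 : a ≠ 1 := by
    intro h
    exact absurd (congrArg Subtype.val h) (by simp [DihedralGroup.one_def, -DihedralGroup.r_zero])
  have hb1 : b ≠ 1 := by
    intro h
    exact absurd (congrArg Subtype.val h) (by simp [DihedralGroup.one_def, -DihedralGroup.r_zero])
  have hab : a ≠ b := by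
    intro h
    have := congrArg Subtype.val h
    simp only [hadef, hbdef] at this
    have hji : j = j + i := by injection this
    exact hi0 (left_eq_add.mp hji)
  classical
  have key := IsCyclic.card_pow_eq_one_le (α := H) (n := 2) two_pos
  have hsub : ({1, a, b} : Finset H) ⊆ Finset.filter (fun x => x ^ 2 = 1) Finset.univ := by
    intro x hx
    simp only [Finset.mem_insert, Finset.mem_singleton] at hx
    rcases hx with rfl | rfl | rfl <;>
      simp [Finset.mem_filter, ha2, hb2]
  have hcard : ({1, a, b} : Finset H).card = 3 := by
    rw [Finset.card_insert_of_notMem (by simp [ha1.symm, hb1.symm]),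
      Finset.card_insert_of_notMem (by simp [hab]), Finset.card_singleton]
  have := Finset.card_le_card hsub
  omega

lemma isCyclic_psi_iff (hm : m ≠ 0)
    (x : Σ D : AddSubgroup (ZMod m), Option (ZMod m ⧸ D)) :
    IsCyclic (psi x.1 x.2) ↔ x.2 = none ∨ x.1 = ⊥ := by
  obtain ⟨D, _ | q⟩ := x
  · simpa using isCyclic_psi_none D
  · simp only [Option.some_ne_none, false_or]
    constructor
    · intro hc
      by_contra hD
      exact not_isCyclic_psi hm hD q hc
    · rintro rfl
      exact isCyclic_psi_bot_some q

noncomputable def cyclicEquiv (m : ℕ) :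
    (AddSubgroup (ZMod m)) ⊕ (ZMod m) ≃
      {x : Σ D : AddSubgroup (ZMod m), Option (ZMod m ⧸ D) // x.2 = none ∨ x.1 = ⊥} where
  toFun := fun s => match s with
    | .inl D => ⟨⟨D, none⟩, Or.inl rfl⟩
    | .inr z => ⟨⟨⊥, some (QuotientAddGroup.mk z)⟩, Or.inr rfl⟩
  invFun := fun x => match x with
    | ⟨⟨D, none⟩, _⟩ => .inl D
    | ⟨⟨_, some q⟩, _⟩ => .inr (Quotient.out q)
  left_inv := by
    rintro (D | z)
    · rfl
    · show Sum.inr (Quotient.out (QuotientAddGroup.mk z)) = Sum.inr z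
      congr 1
      have h1 : (QuotientAddGroup.mk (Quotient.out (QuotientAddGroup.mk z : ZMod m ⧸ (⊥ : AddSubgroup (ZMod m)))) : ZMod m ⧸ (⊥ : AddSubgroup (ZMod m))) = QuotientAddGroup.mk z :=
        QuotientAddGroup.out_eq' _
      rw [QuotientAddGroup.eq] at h1
      exact neg_add_eq_zero.mp (AddSubgroup.mem_bot.mp h1)
  right_inv := by
    rintro ⟨⟨D, o⟩, h⟩
    rcases o with _ | q
    · rfl
    · have hD : D = ⊥ := by
        rcases h with h | h
        · exact absurd h (by simp)
        · exact h
      subst hD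
      apply Subtype.ext
      show (⟨⊥, some (QuotientAddGroup.mk (Quotient.out q))⟩ :
        Σ D : AddSubgroup (ZMod m), Option (ZMod m ⧸ D)) = ⟨⊥, some q⟩
      rw [QuotientAddGroup.out_eq' q]

instance optionFinite (X : Type*) [Finite X] : Finite (Option X) :=
  Finite.of_equiv (X ⊕ PUnit.{1}) (Equiv.optionEquivSumPUnit X).symm

instance quotFinite [NeZero m] (D : AddSubgroup (ZMod m)) : Finite (ZMod m ⧸ D) :=
  Finite.of_surjective _ (QuotientAddGroup.mk_surjective (s := D))

lemma nat_card_sigma {ι : Type*} [Fintype ι] (f : ι → Type*) [∀ i, Finite (f i)] :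
    Nat.card (Σ i, f i) = ∑ i, Nat.card (f i) := by
  classical
  letI : ∀ i, Fintype (f i) := fun i => Fintype.ofFinite _
  simp [Nat.card_eq_fintype_card, Fintype.card_sigma]

lemma nat_card_option (X : Type*) [Finite X] : Nat.card (Option X) = Nat.card X + 1 := by
  letI : Fintype X := Fintype.ofFinite X
  simp [Nat.card_eq_fintype_card]

lemma card_subgroups_dihedral (hm : m ≠ 0) :
    Nat.card (Subgroup (DihedralGroup m)) = m.divisors.card + ∑ d ∈ m.divisors, d := by
  haveI : NeZero m := ⟨hm⟩
  rw [← Nat.card_congr (Equiv.ofBijective _ (psi_bijective (m := m)))]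
  letI : Fintype (AddSubgroup (ZMod m)) := Fintype.ofFinite _
  rw [nat_card_sigma]
  have hfib : ∀ D : AddSubgroup (ZMod m),
      Nat.card (Option (ZMod m ⧸ D)) = 1 + m / Nat.card D := by
    intro D
    rw [nat_card_option, ← AddSubgroup.index_eq_card]
    have h1 : Nat.card D * D.index = m := by
      rw [AddSubgroup.card_mul_index, Nat.card_zmod]
    have hpos : 0 < Nat.card D := Nat.card_pos
    have h2 : m / Nat.card D = D.index :=
      Nat.div_eq_of_eq_mul_left hpos (by rw [mul_comm]; exact h1.symm)
    omega
  simp_rw [hfib]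
  calc ∑ D : AddSubgroup (ZMod m), (1 + m / Nat.card D)
      = ∑ d : {d // d ∈ m.divisors}, (1 + m / (d : ℕ)) :=
        Fintype.sum_equiv (zmodSubgroupEquiv hm) _ _ (fun D => rfl)
    _ = ∑ d ∈ m.divisors, (1 + m / d) := Finset.sum_coe_sort m.divisors (fun d => 1 + m / d)
    _ = m.divisors.card + ∑ d ∈ m.divisors, m / d := by
        rw [Finset.sum_add_distrib, Finset.sum_const, smul_eq_mul, mul_one]
    _ = m.divisors.card + ∑ d ∈ m.divisors, d := by
        have := Nat.sum_div_divisors m id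
        simpa using this

lemma card_addSubgroup_zmod (hm : m ≠ 0) :
    Nat.card (AddSubgroup (ZMod m)) = m.divisors.card := by
  rw [Nat.card_congr (zmodSubgroupEquiv hm), Nat.card_eq_finsetCard]

lemma card_cyclic_dihedral (hm : m ≠ 0) :
    Nat.card {H : Subgroup (DihedralGroup m) // IsCyclic H} = m + m.divisors.card := by
  haveI : NeZero m := ⟨hm⟩
  let e := Equiv.ofBijective _ (psi_bijective (m := m))
  have e1 : {x : Σ D : AddSubgroup (ZMod m), Option (ZMod m ⧸ D) // IsCyclic (psi x.1 x.2)} ≃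
      {H : Subgroup (DihedralGroup m) // IsCyclic H} :=
    Equiv.subtypeEquiv e (fun x => Iff.rfl)
  have e2 : {x : Σ D : AddSubgroup (ZMod m), Option (ZMod m ⧸ D) // IsCyclic (psi x.1 x.2)} ≃
      {x : Σ D : AddSubgroup (ZMod m), Option (ZMod m ⧸ D) // x.2 = none ∨ x.1 = ⊥} :=
    Equiv.subtypeEquivRight (isCyclic_psi_iff hm)
  rw [← Nat.card_congr e1, Nat.card_congr e2, ← Nat.card_congr (cyclicEquiv m),
    Nat.card_sum, card_addSubgroup_zmod hm, Nat.card_zmod, add_comm]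

theorem cdeg_dihedral (m : ℕ) (hm : 0 < m) :
    Nat.card {H : Subgroup (DihedralGroup m) // IsCyclic H} = m + m.divisors.card ∧
    Nat.card (Subgroup (DihedralGroup m)) = m.divisors.card + ∑ d ∈ m.divisors, d ∧
    cdeg (DihedralGroup m) =
      ((m + m.divisors.card : ℕ) : ℚ) /
        ((m.divisors.card + ∑ d ∈ m.divisors, d : ℕ) : ℚ) := by
  have hm' : m ≠ 0 := hm.ne'
  refine ⟨card_cyclic_dihedral hm', card_subgroups_dihedral hm', ?_⟩
  rw [cdeg, card_cyclic_dihedral hm', card_subgroups_dihedral hm']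
end
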